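/- For every integer m ≥ 1, ∏_{k=0}^{m−1} e^{k}/(e^{k}+1) ≥ e^{−2}; and for every integer m ≥ 1 and every real β ≥ m, ∏_{k=0}^{m−1} e^{β}/(e^{k}+e^{β}) ≥ e^{−2}. (These show that for the lower-bound instance with partition function Z(β) = e^{mβ}·∏_{k=0}^{m−1}(e^{k}+e^{β}), the Gibbs probabilities μ_0(m) and μ_β(2m) for β ≥ m are each at least the constant e^{−2}.) -/

import Mathlib

open Finset Real

lemma key_prod (m : ℕ) (a : ℕ → ℝ) (ha : ∀ k, 0 ≤ a k)
    (hsum : ∑ k ∈ Finset.range m, a k ≤ 2) :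
    Real.exp (-2) ≤ ∏ k ∈ Finset.range m, 1 / (1 + a k) := by
  calc Real.exp (-2) ≤ Real.exp (-(∑ k ∈ Finset.range m, a k)) := by
        apply Real.exp_le_exp.2; linarith
    _ = ∏ k ∈ Finset.range m, Real.exp (-(a k)) := by
        rw [← Real.exp_sum, Finset.sum_neg_distrib]
    _ ≤ ∏ k ∈ Finset.range m, 1 / (1 + a k) := by
        apply Finset.prod_le_prod (fun k _ => (Real.exp_pos _).le)
        intro k _
        rw [Real.exp_neg, one_div]
        exact inv_anti₀ (by have := ha k; linarith)
          (by have := Real.add_one_le_exp (a k); linarith)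

lemma geom_bound (r : ℝ) (h0 : 0 ≤ r) (h1 : r < 1) (m : ℕ) :
    ∑ k ∈ Finset.range m, r ^ k ≤ 1 / (1 - r) := by
  have hne : r ≠ 1 := ne_of_lt h1
  rw [geom_sum_eq hne]
  have h2 : (r ^ m - 1) / (r - 1) = (1 - r ^ m) / (1 - r) := by
    rw [div_eq_div_iff (fun h => hne (by linarith [sub_eq_zero.1 h]))
      (fun h => hne (by linarith [sub_eq_zero.1 h]))]; ring
  rw [h2]
  gcongr
  · nlinarith [pow_nonneg h0 m]

/-- For every integer `m ≥ 1`, `∏_{k=0}^{m−1} e^k/(e^k+1) ≥ e^{−2}`; and for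
every real `β ≥ m`, `∏_{k=0}^{m−1} e^β/(e^k+e^β) ≥ e^{−2}`.  (For the
lower-bound instance with `Z(β) = e^{mβ}·∏_{k=0}^{m−1}(e^k+e^β)`, the Gibbs
probabilities `μ_0(m)` and `μ_β(2m)` for `β ≥ m` are at least `e^{−2}`.) -/
theorem stmt_16 (m : ℕ) (hm : 1 ≤ m) :
    Real.exp (-2) ≤ ∏ k ∈ Finset.range m, Real.exp k / (Real.exp k + 1)
    ∧ ∀ β : ℝ, (m : ℝ) ≤ β →
        Real.exp (-2) ≤ ∏ k ∈ Finset.range m, Real.exp β / (Real.exp k + Real.exp β) := by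
  have hE : (2:ℝ) ≤ Real.exp 1 := by have := Real.add_one_le_exp (1:ℝ); linarith
  have hEpos : (0:ℝ) < Real.exp 1 := Real.exp_pos 1
  constructor
  · have heq : ∀ k ∈ Finset.range m, Real.exp k / (Real.exp k + 1)
        = 1 / (1 + Real.exp (-(k:ℝ))) := by
      intro k _
      rw [Real.exp_neg]
      rw [div_eq_div_iff (by positivity) (by positivity)]
      field_simp
    rw [Finset.prod_congr rfl heq]
    apply key_prod _ _ (fun k => (Real.exp_pos _).le)
    have h1 : ∀ k ∈ Finset.range m, Real.exp (-(k:ℝ)) = ((Real.exp 1)⁻¹) ^ k := by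
      intro k _
      rw [← Real.exp_neg, ← Real.exp_nat_mul]
      ring_nf
    rw [Finset.sum_congr rfl h1]
    have := geom_bound ((Real.exp 1)⁻¹) (by positivity)
      (by rw [inv_lt_one_iff₀]; right; linarith) m
    refine this.trans ?_
    rw [div_le_iff₀ (by rw [sub_pos]; rw [inv_lt_one_iff₀]; right; linarith)]
    have : (Real.exp 1)⁻¹ ≤ 1/2 := by
      rw [inv_le_comm₀ hEpos (by norm_num)]; linarith
    nlinarith
  · intro β hβ
    have heq : ∀ k ∈ Finset.range m, Real.exp β / (Real.exp k + Real.exp β)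
        = 1 / (1 + Real.exp ((k:ℝ) - β)) := by
      intro k _
      rw [Real.exp_sub]
      rw [div_eq_div_iff (by positivity) (by positivity)]
      field_simp
      ring
    rw [Finset.prod_congr rfl heq]
    apply key_prod _ _ (fun k => (Real.exp_pos _).le)
    have h1 : ∀ k ∈ Finset.range m, Real.exp ((k:ℝ) - β) ≤ (Real.exp 1)^k / (Real.exp 1)^m := by
      intro k _
      rw [← Real.exp_nat_mul, ← Real.exp_nat_mul, ← Real.exp_sub]
      apply Real.exp_le_exp.2
      simp only [mul_one]
      linarith
    refine (Finset.sum_le_sum h1).trans ?_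
    rw [← Finset.sum_div, geom_sum_eq (by linarith)]
    rw [div_le_iff₀ (by positivity)]
    have hm1 : (1:ℝ) ≤ (Real.exp 1)^m := one_le_pow₀ (by linarith)
    rw [div_le_iff₀ (by linarith)] at *
    nlinarith
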